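/- arXiv:1811.10963 — 4 statements merged into one kernel-verified Lean document; each statement's English description precedes it below -/
import Mathlib

section
/- Let X and Y₁, …, Y_m be ℝ^p-valued random vectors on a probability space (Ω, μ) such that every component of X and of each Y_l has finite fourth moment. Then the cumulative generalized kurtosis matrix is orthogonally equivariant: for any p×p real orthogonal matrix V, G_m(V·X; V·Y₁, …, V·Y_m) = V · G_m(X; Y₁, …, Y_m) · Vᵀ. -/
open MeasureTheory Matrix

/-- Covariance of two real random variables: `Cov(U,V) = E[UV] - E[U] E[V]`. -/
noncomputable def cov {Ω : Type*} [MeasurableSpace Ω] (μ : Measure Ω) (U V : Ω → ℝ) : ℝ :=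
  (∫ ω, U ω * V ω ∂μ) - (∫ ω, U ω ∂μ) * (∫ ω, V ω ∂μ)

/-- The matrix `C_{ij}(X,Y)` with entries `Cov(X_a X_b, Y_i Y_j)`. -/
noncomputable def kurtCovMat {Ω : Type*} [MeasurableSpace Ω] (μ : Measure Ω) {p : ℕ}
    (X Y : Ω → Fin p → ℝ) (i j : Fin p) : Matrix (Fin p) (Fin p) ℝ :=
  Matrix.of fun a b => cov μ (fun ω => X ω a * X ω b) (fun ω => Y ω i * Y ω j)

/-- The generalized kurtosis matrix `g(X,Y) = ∑_i ∑_j C_{ij}(X,Y) C_{ij}(X,Y)ᵀ`. -/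
noncomputable def genKurt {Ω : Type*} [MeasurableSpace Ω] (μ : Measure Ω) {p : ℕ}
    (X Y : Ω → Fin p → ℝ) : Matrix (Fin p) (Fin p) ℝ :=
  ∑ i : Fin p, ∑ j : Fin p, kurtCovMat μ X Y i j * (kurtCovMat μ X Y i j)ᵀ

/-- The cumulative generalized kurtosis matrix `G_m(X; Y₁, …, Y_m) = ∑_l g(X, Y_l)`. -/
noncomputable def cumGenKurt {Ω : Type*} [MeasurableSpace Ω] (μ : Measure Ω) {p m : ℕ}
    (X : Ω → Fin p → ℝ) (Y : Fin m → Ω → Fin p → ℝ) : Matrix (Fin p) (Fin p) ℝ :=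
  ∑ l : Fin m, genKurt μ X (Y l)

/- ### Auxiliary lemmas -/

lemma ennreal_half_aux : (2:ENNReal)⁻¹ = 4⁻¹ + 4⁻¹ := by
  have h4 : (4:ENNReal) = 2*2 := by norm_num
  rw [h4, ENNReal.mul_inv (by norm_num) (by norm_num), ← mul_add,
    ENNReal.inv_two_add_inv_two, mul_one]

section aux
variable {Ω : Type*} [MeasurableSpace Ω] {μ : Measure Ω}

lemma mem2_of_mem4 {f g : Ω → ℝ} (hf : MemLp f 4 μ) (hg : MemLp g 4 μ) :
    MemLp (fun ω => f ω * g ω) 2 μ := by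
  have := hg.smul (p := 4) (q := 4) (r := 2) hf (hpqr := ⟨by simp [ennreal_half_aux]⟩)
  exact (by simpa [smul_eq_mul, Pi.smul_def, mul_comm] using this : MemLp (f * g) 2 μ)

lemma int_of_mem2 {f g : Ω → ℝ} (hf : MemLp f 2 μ) (hg : MemLp g 2 μ) :
    Integrable (fun ω => f ω * g ω) μ := by
  have := hg.smul (p := 2) (q := 2) (r := 1) hf
    (hpqr := ⟨by simp [ENNReal.inv_two_add_inv_two]⟩)
  rw [← memLp_one_iff_integrable]
  exact (by simpa [smul_eq_mul, Pi.smul_def, mul_comm] using this : MemLp (f * g) 1 μ)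

/-- Bilinearity of covariance over finite sums. -/
lemma cov_sum {ι κ : Type*} [Fintype ι] [Fintype κ]
    (U : ι → Ω → ℝ) (W : κ → Ω → ℝ) (α : ι → ℝ) (β : κ → ℝ)
    (hU : ∀ c, Integrable (U c) μ) (hW : ∀ k, Integrable (W k) μ)
    (hUW : ∀ c k, Integrable (fun ω => U c ω * W k ω) μ) :
    cov μ (fun ω => ∑ c, α c * U c ω) (fun ω => ∑ k, β k * W k ω)
      = ∑ c, ∑ k, α c * β k * cov μ (U c) (W k) := by
  unfold cov
  have key : ∀ ω, (∑ c, α c * U c ω) * (∑ k, β k * W k ω)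
      = ∑ c, ∑ k, α c * β k * (U c ω * W k ω) := by
    intro ω
    rw [Finset.sum_mul_sum]
    exact Finset.sum_congr rfl fun c _ => Finset.sum_congr rfl fun k _ => by ring
  have h1 : (∫ ω, (∑ c, α c * U c ω) * (∑ k, β k * W k ω) ∂μ)
      = ∑ c, ∑ k, α c * β k * ∫ ω, U c ω * W k ω ∂μ := by
    simp_rw [key]
    rw [integral_finset_sum _ (fun c _ =>
      integrable_finset_sum _ (fun k _ => ((hUW c k).const_mul _)))]
    refine Finset.sum_congr rfl fun c _ => ?_
    rw [integral_finset_sum _ (fun k _ => ((hUW c k).const_mul _))]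
    exact Finset.sum_congr rfl fun k _ => integral_const_mul _ _
  have h2 : (∫ ω, (∑ c, α c * U c ω) ∂μ) = ∑ c, α c * ∫ ω, U c ω ∂μ := by
    rw [integral_finset_sum _ (fun c _ => (hU c).const_mul _)]
    exact Finset.sum_congr rfl fun c _ => integral_const_mul _ _
  have h3 : (∫ ω, (∑ k, β k * W k ω) ∂μ) = ∑ k, β k * ∫ ω, W k ω ∂μ := by
    rw [integral_finset_sum _ (fun k _ => (hW k).const_mul _)]
    exact Finset.sum_congr rfl fun k _ => integral_const_mul _ _
  rw [h1, h2, h3, Finset.sum_mul_sum, ← Finset.sum_sub_distrib]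
  refine Finset.sum_congr rfl fun c _ => ?_
  rw [← Finset.sum_sub_distrib]
  refine Finset.sum_congr rfl fun k _ => ?_
  ring

lemma conj_entry {p : ℕ} (C V : Matrix (Fin p) (Fin p) ℝ) (a b : Fin p) :
    (V * C * Vᵀ) a b = ∑ cd : Fin p × Fin p, V a cd.1 * V b cd.2 * C cd.1 cd.2 := by
  rw [Fintype.sum_prod_type]
  simp only [Matrix.mul_apply, Matrix.transpose_apply, Finset.sum_mul]
  rw [Finset.sum_comm]
  exact Finset.sum_congr rfl fun c _ => Finset.sum_congr rfl fun d _ => by ring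

/-- How `kurtCovMat` transforms under a linear map. -/
lemma kurtCovMat_transform {p : ℕ} [IsProbabilityMeasure μ]
    (X Z : Ω → Fin p → ℝ)
    (hX4 : ∀ i, MemLp (fun ω => X ω i) 4 μ)
    (hZ4 : ∀ i, MemLp (fun ω => Z ω i) 4 μ)
    (V : Matrix (Fin p) (Fin p) ℝ) (i j : Fin p) :
    kurtCovMat μ (fun ω => V.mulVec (X ω)) (fun ω => V.mulVec (Z ω)) i j
      = ∑ kl : Fin p × Fin p, (V i kl.1 * V j kl.2) •
          (V * kurtCovMat μ X Z kl.1 kl.2 * Vᵀ) := by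
  ext a b
  have hexp : ∀ (W : Ω → Fin p → ℝ) (a b : Fin p) (ω : Ω),
      (V.mulVec (W ω)) a * (V.mulVec (W ω)) b
        = ∑ cd : Fin p × Fin p, (V a cd.1 * V b cd.2) * (W ω cd.1 * W ω cd.2) := by
    intro W a b ω
    rw [Fintype.sum_prod_type]
    simp only [Matrix.mulVec, dotProduct, Finset.sum_mul_sum]
    exact Finset.sum_congr rfl fun c _ => Finset.sum_congr rfl fun d _ => by ring
  have hL : kurtCovMat μ (fun ω => V.mulVec (X ω)) (fun ω => V.mulVec (Z ω)) i j a b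
      = ∑ cd : Fin p × Fin p, ∑ kl : Fin p × Fin p,
          (V a cd.1 * V b cd.2) * (V i kl.1 * V j kl.2) *
            cov μ (fun ω => X ω cd.1 * X ω cd.2) (fun ω => Z ω kl.1 * Z ω kl.2) := by
    show cov μ _ _ = _
    have e1 : (fun ω => (V.mulVec (X ω)) a * (V.mulVec (X ω)) b)
        = fun ω => ∑ cd : Fin p × Fin p, (V a cd.1 * V b cd.2) * (X ω cd.1 * X ω cd.2) := by
      funext ω; exact hexp X a b ω
    have e2 : (fun ω => (V.mulVec (Z ω)) i * (V.mulVec (Z ω)) j)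
        = fun ω => ∑ kl : Fin p × Fin p, (V i kl.1 * V j kl.2) * (Z ω kl.1 * Z ω kl.2) := by
      funext ω; exact hexp Z i j ω
    rw [e1, e2]
    exact cov_sum _ _ _ _
      (fun cd => (mem2_of_mem4 (hX4 cd.1) (hX4 cd.2)).integrable (by norm_num))
      (fun kl => (mem2_of_mem4 (hZ4 kl.1) (hZ4 kl.2)).integrable (by norm_num))
      (fun cd kl => int_of_mem2 (mem2_of_mem4 (hX4 cd.1) (hX4 cd.2))
        (mem2_of_mem4 (hZ4 kl.1) (hZ4 kl.2)))
  rw [hL, Finset.sum_comm]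
  rw [Matrix.sum_apply]
  refine Finset.sum_congr rfl fun kl _ => ?_
  rw [Matrix.smul_apply, conj_entry, smul_eq_mul, Finset.mul_sum]
  refine Finset.sum_congr rfl fun cd _ => ?_
  simp only [kurtCovMat, Matrix.of_apply]
  ring

/-- The key algebraic identity. -/
lemma sum_conj {p : ℕ} (M : Fin p → Fin p → Matrix (Fin p) (Fin p) ℝ)
    (V : Matrix (Fin p) (Fin p) ℝ) (hV : Vᵀ * V = 1) :
    ∑ i : Fin p, ∑ j : Fin p,
      (∑ kl : Fin p × Fin p, (V i kl.1 * V j kl.2) • M kl.1 kl.2) *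
      (∑ kl : Fin p × Fin p, (V i kl.1 * V j kl.2) • M kl.1 kl.2)ᵀ
    = ∑ k : Fin p, ∑ l : Fin p, M k l * (M k l)ᵀ := by
  have key : ∀ i j : Fin p,
      (∑ kl : Fin p × Fin p, (V i kl.1 * V j kl.2) • M kl.1 kl.2) *
      (∑ kl : Fin p × Fin p, (V i kl.1 * V j kl.2) • M kl.1 kl.2)ᵀ
      = ∑ kl : Fin p × Fin p, ∑ kl' : Fin p × Fin p,
          (V i kl.1 * V j kl.2 * (V i kl'.1 * V j kl'.2)) •
            (M kl.1 kl.2 * (M kl'.1 kl'.2)ᵀ) := by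
    intro i j
    rw [Matrix.transpose_sum, Finset.sum_mul_sum]
    refine Finset.sum_congr rfl fun kl _ => Finset.sum_congr rfl fun kl' _ => ?_
    rw [Matrix.transpose_smul, smul_mul_assoc, mul_smul_comm, smul_smul]
  simp_rw [key]
  rw [← Fintype.sum_prod_type (f := fun ij : Fin p × Fin p =>
    ∑ kl : Fin p × Fin p, ∑ kl' : Fin p × Fin p,
      (V ij.1 kl.1 * V ij.2 kl.2 * (V ij.1 kl'.1 * V ij.2 kl'.2)) •
        (M kl.1 kl.2 * (M kl'.1 kl'.2)ᵀ))]
  rw [Finset.sum_comm]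
  have inner : ∀ kl : Fin p × Fin p,
      (∑ ij : Fin p × Fin p, ∑ kl' : Fin p × Fin p,
        (V ij.1 kl.1 * V ij.2 kl.2 * (V ij.1 kl'.1 * V ij.2 kl'.2)) •
          (M kl.1 kl.2 * (M kl'.1 kl'.2)ᵀ))
      = M kl.1 kl.2 * (M kl.1 kl.2)ᵀ := by
    intro kl
    rw [Finset.sum_comm]
    have coeff : ∀ kl' : Fin p × Fin p,
        (∑ ij : Fin p × Fin p,
          V ij.1 kl.1 * V ij.2 kl.2 * (V ij.1 kl'.1 * V ij.2 kl'.2))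
        = (if kl' = kl then (1:ℝ) else 0) := by
      intro kl'
      have : (∑ ij : Fin p × Fin p,
          V ij.1 kl.1 * V ij.2 kl.2 * (V ij.1 kl'.1 * V ij.2 kl'.2))
          = (∑ i, V i kl.1 * V i kl'.1) * (∑ j, V j kl.2 * V j kl'.2) := by
        rw [Fintype.sum_prod_type, Finset.sum_mul_sum]
        exact Finset.sum_congr rfl fun i _ => Finset.sum_congr rfl fun j _ => by ring
      have h1 : (∑ i, V i kl.1 * V i kl'.1) = (Vᵀ * V) kl.1 kl'.1 := by
        simp [Matrix.mul_apply, Matrix.transpose_apply]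
      have h2 : (∑ j, V j kl.2 * V j kl'.2) = (Vᵀ * V) kl.2 kl'.2 := by
        simp [Matrix.mul_apply, Matrix.transpose_apply]
      rw [this, h1, h2, hV]
      by_cases hk : kl' = kl
      · subst hk; simp [Matrix.one_apply]
      · have hne : kl.1 ≠ kl'.1 ∨ kl.2 ≠ kl'.2 := by
          by_contra h; push_neg at h; exact hk (Prod.ext h.1.symm h.2.symm)
        rcases hne with h | h <;> simp [Matrix.one_apply, h, hk]
    calc (∑ kl' : Fin p × Fin p, ∑ ij : Fin p × Fin p,
        (V ij.1 kl.1 * V ij.2 kl.2 * (V ij.1 kl'.1 * V ij.2 kl'.2)) •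
          (M kl.1 kl.2 * (M kl'.1 kl'.2)ᵀ))
        = ∑ kl' : Fin p × Fin p, (if kl' = kl then (1:ℝ) else 0) •
            (M kl.1 kl.2 * (M kl'.1 kl'.2)ᵀ) := by
          refine Finset.sum_congr rfl fun kl' _ => ?_
          rw [← Finset.sum_smul, coeff kl']
      _ = M kl.1 kl.2 * (M kl.1 kl.2)ᵀ := by
          simp [ite_smul, Finset.sum_ite_eq']
  simp_rw [inner]
  rw [Fintype.sum_prod_type]

end aux

/-- Orthogonal equivariance of the cumulative generalized kurtosis matrix:
`G_m(V X; V Y₁, …, V Y_m) = V G_m(X; Y₁, …, Y_m) Vᵀ` for orthogonal `V`. -/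
theorem cumGenKurt_orthogonal_equivariant {Ω : Type*} [MeasurableSpace Ω]
    (μ : Measure Ω) [IsProbabilityMeasure μ] {p m : ℕ}
    (X : Ω → Fin p → ℝ) (Y : Fin m → Ω → Fin p → ℝ)
    (hXmeas : Measurable X) (hYmeas : ∀ l, Measurable (Y l))
    (hX4 : ∀ i, MemLp (fun ω => X ω i) 4 μ)
    (hY4 : ∀ l i, MemLp (fun ω => Y l ω i) 4 μ)
    (V : Matrix (Fin p) (Fin p) ℝ) (hV : Vᵀ * V = 1) (hV' : V * Vᵀ = 1) :
    cumGenKurt μ (fun ω => V.mulVec (X ω)) (fun l ω => V.mulVec (Y l ω)) =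
      V * cumGenKurt μ X Y * Vᵀ := by
  have hgen : ∀ l : Fin m,
      genKurt μ (fun ω => V.mulVec (X ω)) (fun ω => V.mulVec (Y l ω))
        = V * genKurt μ X (Y l) * Vᵀ := by
    intro l
    unfold genKurt
    have htrans := kurtCovMat_transform (μ := μ) X (Y l) hX4 (hY4 l) V
    simp_rw [htrans]
    rw [sum_conj (fun k l' => V * kurtCovMat μ X (Y l) k l' * Vᵀ) V hV]
    rw [Finset.mul_sum, Finset.sum_mul]
    refine Finset.sum_congr rfl fun k _ => ?_
    rw [Finset.mul_sum, Finset.sum_mul]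
    refine Finset.sum_congr rfl fun l' _ => ?_
    rw [Matrix.transpose_mul, Matrix.transpose_mul, Matrix.transpose_transpose]
    simp only [Matrix.mul_assoc]
    rw [← Matrix.mul_assoc Vᵀ V, hV, Matrix.one_mul]
  unfold cumGenKurt
  simp_rw [hgen]
  rw [Finset.mul_sum, Finset.sum_mul]
end

section
/- Let X and Y₁, …, Y_m be ℝ^p-valued random vectors on a probability space (Ω, μ) such that every component has finite fourth moment and mean zero, i.e. E[X_i] = 0 and E[(Y_l)_i] = 0 for all i and l. Assume the p random vectors W_i = (X_i, (Y₁)_i, …, (Y_m)_i) ∈ ℝ^{m+1}, for i = 1, …, p, are mutually independent. Then the cumulative generalized kurtosis matrix G_m(X; Y₁, …, Y_m) is a diagonal matrix. -/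
open MeasureTheory Matrix ProbabilityTheory

section helpers

variable {Ω : Type*} [MeasurableSpace Ω] {μ : Measure Ω} {p q : ℕ}
  {f : Fin p → Ω → (Fin q → ℝ)}

lemma helperH1 (hf : ∀ k, Measurable (f k))
    (hindep : iIndepFun f μ)
    {s t : Fin p} (hst : s ≠ t) (φ ψ : (Fin q → ℝ) → ℝ)
    (hφ : Measurable φ) (hψ : Measurable ψ) :
    (∫ ω, φ (f s ω) * ψ (f t ω) ∂μ)
      = (∫ ω, φ (f s ω) ∂μ) * (∫ ω, ψ (f t ω) ∂μ) :=
  IndepFun.integral_mul_eq_mul_integral ((hindep.indepFun hst).comp hφ hψ)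
    (hφ.comp (hf s)).aestronglyMeasurable (hψ.comp (hf t)).aestronglyMeasurable

lemma helperH2 (hf : ∀ k, Measurable (f k))
    (hindep : iIndepFun f μ)
    {s t u : Fin p} (hsu : s ≠ u) (htu : t ≠ u)
    (φ : (Fin q → ℝ) × (Fin q → ℝ) → ℝ) (ψ : (Fin q → ℝ) → ℝ)
    (hφ : Measurable φ) (hψ : Measurable ψ) :
    (∫ ω, φ (f s ω, f t ω) * ψ (f u ω) ∂μ)
      = (∫ ω, φ (f s ω, f t ω) ∂μ) * (∫ ω, ψ (f u ω) ∂μ) :=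
  IndepFun.integral_mul_eq_mul_integral ((hindep.indepFun_prodMk hf s t u hsu htu).comp hφ hψ)
    (hφ.comp ((hf s).prodMk (hf t))).aestronglyMeasurable
    (hψ.comp (hf u)).aestronglyMeasurable

lemma helperH3 (hf : ∀ k, Measurable (f k))
    (hindep : iIndepFun f μ)
    {s t u v : Fin p} (hsu : s ≠ u) (hsv : s ≠ v) (htu : t ≠ u) (htv : t ≠ v)
    (φ ψ : (Fin q → ℝ) × (Fin q → ℝ) → ℝ)
    (hφ : Measurable φ) (hψ : Measurable ψ) :
    (∫ ω, φ (f s ω, f t ω) * ψ (f u ω, f v ω) ∂μ)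
      = (∫ ω, φ (f s ω, f t ω) ∂μ) * (∫ ω, ψ (f u ω, f v ω) ∂μ) :=
  IndepFun.integral_mul_eq_mul_integral
    ((hindep.indepFun_prodMk_prodMk hf s t u v hsu hsv htu htv).comp hφ hψ)
    (hφ.comp ((hf s).prodMk (hf t))).aestronglyMeasurable
    (hψ.comp ((hf u).prodMk (hf v))).aestronglyMeasurable

end helpers

lemma cov_eq_zero_aux {Ω : Type*} [MeasurableSpace Ω]
    (μ : Measure Ω) {p m : ℕ}
    (X : Ω → Fin p → ℝ) (Y : Fin m → Ω → Fin p → ℝ)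
    (hXmeas : Measurable X) (hYmeas : ∀ l, Measurable (Y l))
    (hX0 : ∀ i, (∫ ω, X ω i ∂μ) = 0)
    (hY0 : ∀ l i, (∫ ω, Y l ω i ∂μ) = 0)
    (hindep : iIndepFun
      (fun i ω => (Fin.cons (X ω i) (fun l => Y l ω i) : Fin (m + 1) → ℝ)) μ)
    (l : Fin m) (a c i j : Fin p) (h : ¬((i = a ∧ j = c) ∨ (i = c ∧ j = a))) :
    cov μ (fun ω => X ω a * X ω c) (fun ω => Y l ω i * Y l ω j) = 0 := by
  set f : Fin p → Ω → (Fin (m + 1) → ℝ) :=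
    fun i ω => (Fin.cons (X ω i) (fun l => Y l ω i) : Fin (m + 1) → ℝ) with hf_def
  have hf : ∀ k, Measurable (f k) := by
    intro k
    rw [measurable_pi_iff]
    intro r
    induction r using Fin.cases with
    | zero => simpa [hf_def] using hXmeas.eval
    | succ l' => simpa [hf_def] using (hYmeas l').eval
  have hXf : ∀ (k : Fin p) (ω : Ω), X ω k = f k ω 0 := by
    intro k ω; simp [hf_def]
  have hYf : ∀ (l' : Fin m) (k : Fin p) (ω : Ω), Y l' ω k = f k ω l'.succ := by
    intro l' k ω; simp [hf_def]
  have hEX : ∀ k, (∫ ω, f k ω 0 ∂μ) = 0 := by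
    intro k
    rw [show (fun ω => f k ω 0) = fun ω => X ω k from funext fun ω => (hXf k ω).symm]
    exact hX0 k
  have hEY : ∀ (l' : Fin m) (k : Fin p), (∫ ω, f k ω l'.succ ∂μ) = 0 := by
    intro l' k
    rw [show (fun ω => f k ω l'.succ) = fun ω => Y l' ω k from
      funext fun ω => (hYf l' k ω).symm]
    exact hY0 l' k
  simp only [cov, hXf, hYf]
  clear hXf hYf hX0 hY0 hXmeas hYmeas
  by_cases hia : i = a
  · subst hia
    -- survivor: i (was a)
    by_cases hjc : j = c
    · exact absurd (Or.inl ⟨rfl, hjc⟩) h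
    · by_cases hja : j = i
      · subst hja
        -- survivor: j (was i = a)
        by_cases hac : j = c
        · exact absurd (Or.inl ⟨rfl, hac⟩) h
        · have e1 : (fun ω => f j ω 0 * f c ω 0 * (f j ω l.succ * f j ω l.succ))
              = fun ω => (f j ω 0 * (f j ω l.succ * f j ω l.succ)) * f c ω 0 :=
            funext fun ω => by ring
          rw [e1]
          have key1 : (∫ ω, (f j ω 0 * (f j ω l.succ * f j ω l.succ)) * f c ω 0 ∂μ)
              = (∫ ω, f j ω 0 * (f j ω l.succ * f j ω l.succ) ∂μ) * (∫ ω, f c ω 0 ∂μ) :=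
            helperH1 hf hindep hac (fun v => v 0 * (v l.succ * v l.succ)) (fun v => v 0)
              (by fun_prop) (by fun_prop)
          have key2 : (∫ ω, f j ω 0 * f c ω 0 ∂μ)
              = (∫ ω, f j ω 0 ∂μ) * (∫ ω, f c ω 0 ∂μ) :=
            helperH1 hf hindep hac (fun v => v 0) (fun v => v 0) (by fun_prop) (by fun_prop)
          rw [key1, key2, hEX c]
          ring
      · -- case 3a : X-indices i c, Y-indices i j, j ∉ {i, c}
        have e1 : (fun ω => f i ω 0 * f c ω 0 * (f i ω l.succ * f j ω l.succ))
            = fun ω => (f i ω 0 * f c ω 0 * f i ω l.succ) * f j ω l.succ :=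
          funext fun ω => by ring
        rw [e1]
        have key1 : (∫ ω, (f i ω 0 * f c ω 0 * f i ω l.succ) * f j ω l.succ ∂μ)
            = (∫ ω, f i ω 0 * f c ω 0 * f i ω l.succ ∂μ) * (∫ ω, f j ω l.succ ∂μ) :=
          helperH2 hf hindep (Ne.symm hja) (Ne.symm hjc)
            (fun q => q.1 0 * q.2 0 * q.1 l.succ) (fun v => v l.succ)
            (by fun_prop) (by fun_prop)
        have key2 : (∫ ω, f i ω l.succ * f j ω l.succ ∂μ)
            = (∫ ω, f i ω l.succ ∂μ) * (∫ ω, f j ω l.succ ∂μ) :=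
          helperH1 hf hindep (Ne.symm hja) (fun v => v l.succ) (fun v => v l.succ)
            (by fun_prop) (by fun_prop)
        rw [key1, key2, hEY l j]
        ring
  · by_cases hic : i = c
    · subst hic
      -- survivor: i (was c)
      by_cases hja : j = a
      · exact absurd (Or.inr ⟨rfl, hja⟩) h
      · by_cases hji : j = i
        · subst hji
          -- survivor: j (was i = c)
          have e1 : (fun ω => f a ω 0 * f j ω 0 * (f j ω l.succ * f j ω l.succ))
              = fun ω => (f j ω 0 * (f j ω l.succ * f j ω l.succ)) * f a ω 0 :=
            funext fun ω => by ring
          rw [e1]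
          have key1 : (∫ ω, (f j ω 0 * (f j ω l.succ * f j ω l.succ)) * f a ω 0 ∂μ)
              = (∫ ω, f j ω 0 * (f j ω l.succ * f j ω l.succ) ∂μ) * (∫ ω, f a ω 0 ∂μ) :=
            helperH1 hf hindep hja (fun v => v 0 * (v l.succ * v l.succ)) (fun v => v 0)
              (by fun_prop) (by fun_prop)
          have key2 : (∫ ω, f a ω 0 * f j ω 0 ∂μ)
              = (∫ ω, f a ω 0 ∂μ) * (∫ ω, f j ω 0 ∂μ) :=
            helperH1 hf hindep (Ne.symm hja) (fun v => v 0) (fun v => v 0)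
              (by fun_prop) (by fun_prop)
          rw [key1, key2, hEX a]
          ring
        · -- case 3a' : X-indices a i, Y-indices i j, j ∉ {a, i}
          have e1 : (fun ω => f a ω 0 * f i ω 0 * (f i ω l.succ * f j ω l.succ))
              = fun ω => (f a ω 0 * f i ω 0 * f i ω l.succ) * f j ω l.succ :=
            funext fun ω => by ring
          rw [e1]
          have key1 : (∫ ω, (f a ω 0 * f i ω 0 * f i ω l.succ) * f j ω l.succ ∂μ)
              = (∫ ω, f a ω 0 * f i ω 0 * f i ω l.succ ∂μ) * (∫ ω, f j ω l.succ ∂μ) :=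
            helperH2 hf hindep (Ne.symm hja) (Ne.symm hji)
              (fun q => q.1 0 * q.2 0 * q.2 l.succ) (fun v => v l.succ)
              (by fun_prop) (by fun_prop)
          have key2 : (∫ ω, f i ω l.succ * f j ω l.succ ∂μ)
              = (∫ ω, f i ω l.succ ∂μ) * (∫ ω, f j ω l.succ ∂μ) :=
            helperH1 hf hindep (Ne.symm hji) (fun v => v l.succ) (fun v => v l.succ)
              (by fun_prop) (by fun_prop)
          rw [key1, key2, hEY l j]
          ring
    · -- i ∉ {a, c}
      by_cases hja : j = a
      · subst hja
        -- survivor: j (was a); hia : ¬ i = j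
        have e1 : (fun ω => f j ω 0 * f c ω 0 * (f i ω l.succ * f j ω l.succ))
            = fun ω => (f j ω 0 * f c ω 0 * f j ω l.succ) * f i ω l.succ :=
          funext fun ω => by ring
        rw [e1]
        have key1 : (∫ ω, (f j ω 0 * f c ω 0 * f j ω l.succ) * f i ω l.succ ∂μ)
            = (∫ ω, f j ω 0 * f c ω 0 * f j ω l.succ ∂μ) * (∫ ω, f i ω l.succ ∂μ) :=
          helperH2 hf hindep (Ne.symm hia) (Ne.symm hic)
            (fun q => q.1 0 * q.2 0 * q.1 l.succ) (fun v => v l.succ)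
            (by fun_prop) (by fun_prop)
        have key2 : (∫ ω, f i ω l.succ * f j ω l.succ ∂μ)
            = (∫ ω, f i ω l.succ ∂μ) * (∫ ω, f j ω l.succ ∂μ) :=
          helperH1 hf hindep hia (fun v => v l.succ) (fun v => v l.succ)
            (by fun_prop) (by fun_prop)
        rw [key1, key2, hEY l i]
        ring
      · by_cases hjc : j = c
        · subst hjc
          -- survivor: j (was c); hic : ¬ i = j
          have e1 : (fun ω => f a ω 0 * f j ω 0 * (f i ω l.succ * f j ω l.succ))
              = fun ω => (f a ω 0 * f j ω 0 * f j ω l.succ) * f i ω l.succ :=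
            funext fun ω => by ring
          rw [e1]
          have key1 : (∫ ω, (f a ω 0 * f j ω 0 * f j ω l.succ) * f i ω l.succ ∂μ)
              = (∫ ω, f a ω 0 * f j ω 0 * f j ω l.succ ∂μ) * (∫ ω, f i ω l.succ ∂μ) :=
            helperH2 hf hindep (Ne.symm hia) (Ne.symm hic)
              (fun q => q.1 0 * q.2 0 * q.2 l.succ) (fun v => v l.succ)
              (by fun_prop) (by fun_prop)
          have key2 : (∫ ω, f i ω l.succ * f j ω l.succ ∂μ)
              = (∫ ω, f i ω l.succ ∂μ) * (∫ ω, f j ω l.succ ∂μ) :=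
            helperH1 hf hindep hic (fun v => v l.succ) (fun v => v l.succ)
              (by fun_prop) (by fun_prop)
          rw [key1, key2, hEY l i]
          ring
        · -- case 1, {i, j} ∩ {a, c} = ∅
          have key : (∫ ω, (f a ω 0 * f c ω 0) * (f i ω l.succ * f j ω l.succ) ∂μ)
              = (∫ ω, f a ω 0 * f c ω 0 ∂μ) * (∫ ω, f i ω l.succ * f j ω l.succ ∂μ) :=
            helperH3 hf hindep (Ne.symm hia) (Ne.symm hja) (Ne.symm hic) (Ne.symm hjc)
              (fun q => q.1 0 * q.2 0) (fun q => q.1 l.succ * q.2 l.succ)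
              (by fun_prop) (by fun_prop)
          rw [key]
          ring

/-- Independence property of the cumulative generalized kurtosis matrix: if the component
vectors `W_i = (X_i, (Y₁)_i, …, (Y_m)_i)` are mutually independent and all components are
centered with finite fourth moments, then `G_m(X; Y₁, …, Y_m)` is diagonal. -/
theorem cumGenKurt_isDiag_of_indep {Ω : Type*} [MeasurableSpace Ω]
    (μ : Measure Ω) [IsProbabilityMeasure μ] {p m : ℕ}
    (X : Ω → Fin p → ℝ) (Y : Fin m → Ω → Fin p → ℝ)
    (hXmeas : Measurable X) (hYmeas : ∀ l, Measurable (Y l))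
    (hX4 : ∀ i, MemLp (fun ω => X ω i) 4 μ)
    (hY4 : ∀ l i, MemLp (fun ω => Y l ω i) 4 μ)
    (hX0 : ∀ i, (∫ ω, X ω i ∂μ) = 0)
    (hY0 : ∀ l i, (∫ ω, Y l ω i ∂μ) = 0)
    (hindep : iIndepFun
      (fun i ω => (Fin.cons (X ω i) (fun l => Y l ω i) : Fin (m + 1) → ℝ)) μ) :
    (cumGenKurt μ X Y).IsDiag := by
  intro a b hab
  simp only [cumGenKurt, genKurt, kurtCovMat, Matrix.sum_apply, Matrix.mul_apply,
    Matrix.transpose_apply, Matrix.of_apply]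
  refine Finset.sum_eq_zero fun l _ => ?_
  refine Finset.sum_eq_zero fun i _ => ?_
  refine Finset.sum_eq_zero fun j _ => ?_
  refine Finset.sum_eq_zero fun c _ => ?_
  by_cases h1 : (i = a ∧ j = c) ∨ (i = c ∧ j = a)
  · have h2 : ¬((i = b ∧ j = c) ∨ (i = c ∧ j = b)) := by
      rcases h1 with ⟨rfl, rfl⟩ | ⟨rfl, rfl⟩
      · rintro (⟨hh1, _⟩ | ⟨hh1, hh2⟩)
        exacts [hab hh1, hab (hh1.trans hh2)]
      · rintro (⟨hh1, hh2⟩ | ⟨_, hh2⟩)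
        exacts [hab (hh2.trans hh1), hab hh2]
    rw [cov_eq_zero_aux μ X Y hXmeas hYmeas hX0 hY0 hindep l b c i j h2, mul_zero]
  · rw [cov_eq_zero_aux μ X Y hXmeas hYmeas hX0 hY0 hindep l a c i j h1, zero_mul]
end

section
/- Consider a stationary GARCH(1,1) step with Gaussian innovations: let ω > 0 and α, β ≥ 0, and let σ₀, ε₀, z₀, σ₁, ε₁, z₁ be real random variables on a probability space (Ω, μ) such that: σ₀ ≥ 0 and σ₁ ≥ 0; ε₀ and ε₁ are standard Gaussian N(0,1); ε₀ is independent of σ₀ and z₀ = σ₀ ε₀; ε₁ is independent of the pair (σ₀, z₀); σ₁² = ω + α z₀² + β σ₀² and z₁ = σ₁ ε₁; the pair (z₁, σ₁) has the same joint distribution as (z₀, σ₀) (stationarity); E[σ₀²] = 1; and E[σ₀⁴] < ∞. Then 3α² + 2αβ + β² < 1 and the stationary fourth moment of the process is E[z₀⁴] = 3(ω² + 2ω(α + β)) / (1 − 3α² − 2αβ − β²). -/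
open MeasureTheory ProbabilityTheory
open Real Set
open scoped NNReal ENNReal

lemma gauss_Ioi (q : ℕ) :
    ∫ x in Ioi (0:ℝ), x ^ q * rexp (-(2⁻¹:ℝ) * x ^ 2)
      = (2⁻¹:ℝ) ^ (-((q:ℝ)+1)/2) * (1/2) * Real.Gamma (((q:ℝ)+1)/2) := by
  rw [← integral_rpow_mul_exp_neg_mul_rpow (by norm_num : (0:ℝ) < 2)
      (lt_of_lt_of_le neg_one_lt_zero (Nat.cast_nonneg q)) (by norm_num : (0:ℝ) < (2⁻¹:ℝ))]
  refine setIntegral_congr_fun measurableSet_Ioi (fun x _ => ?_)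
  rw [Real.rpow_natCast, show ((2:ℝ)) = ((2:ℕ):ℝ) by norm_num, Real.rpow_natCast]


lemma gauss_line (q : ℕ) (hq : Even q) :
    ∫ x : ℝ, x ^ q * rexp (-(2⁻¹:ℝ) * x ^ 2)
      = 2 * ((2⁻¹:ℝ) ^ (-((q:ℝ)+1)/2) * (1/2) * Real.Gamma (((q:ℝ)+1)/2)) := by
  rw [← gauss_Ioi, ← integral_comp_abs (f := fun t => t ^ q * rexp (-(2⁻¹:ℝ) * t ^ 2))]
  congr 1
  funext x
  rw [hq.pow_abs, sq_abs]

lemma Gamma_three_halves : Real.Gamma (3/2) = Real.sqrt π / 2 := by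
  rw [show (3/2:ℝ) = 1/2 + 1 by norm_num, Real.Gamma_add_one (by norm_num), Real.Gamma_one_half_eq]
  ring

lemma Gamma_five_halves : Real.Gamma (5/2) = 3 * Real.sqrt π / 4 := by
  rw [show (5/2:ℝ) = 3/2 + 1 by norm_num, Real.Gamma_add_one (by norm_num), Gamma_three_halves]
  ring

lemma half_rpow (a : ℝ) : (2⁻¹:ℝ) ^ (-a) = (2:ℝ) ^ a := by
  rw [Real.inv_rpow (by norm_num), Real.rpow_neg (by norm_num), inv_inv]

lemma two_rpow_three_halves : (2:ℝ) ^ ((3:ℝ)/2) = 2 * Real.sqrt 2 := by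
  rw [show (3:ℝ)/2 = 1 + 1/2 by norm_num, Real.rpow_add (by norm_num), Real.rpow_one,
    ← Real.sqrt_eq_rpow]

lemma two_rpow_five_halves : (2:ℝ) ^ ((5:ℝ)/2) = 4 * Real.sqrt 2 := by
  rw [show (5:ℝ)/2 = 2 + 1/2 by norm_num, Real.rpow_add (by norm_num), ← Real.sqrt_eq_rpow,
    show ((2:ℝ)^(2:ℝ)) = 4 by rw [show (2:ℝ) = ((2:ℕ):ℝ) by norm_num, Real.rpow_natCast]; norm_num]

lemma I2 : ∫ x : ℝ, x ^ 2 * rexp (-(2⁻¹:ℝ) * x ^ 2) = Real.sqrt (2 * π) := by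
  rw [gauss_line 2 (by decide)]
  norm_num
  rw [show (1/2:ℝ) = 2⁻¹ by norm_num, half_rpow, two_rpow_three_halves, Gamma_three_halves]
  ring

lemma I4 : ∫ x : ℝ, x ^ 4 * rexp (-(2⁻¹:ℝ) * x ^ 2) = 3 * Real.sqrt (2 * π) := by
  rw [gauss_line 4 (by decide)]
  norm_num
  rw [show (1/2:ℝ) = 2⁻¹ by norm_num, half_rpow, two_rpow_five_halves, Gamma_five_halves]
  ring

lemma pdf01 (x : ℝ) :
    gaussianPDFReal 0 1 x = (Real.sqrt (2*π))⁻¹ * rexp (-(2⁻¹:ℝ) * x ^ 2) := by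
  simp only [gaussianPDFReal, NNReal.coe_one, mul_one, sub_zero]
  congr 1
  ring

lemma gaussianPDF01 : gaussianPDF 0 1
    = fun x => ((Real.toNNReal (gaussianPDFReal 0 1 x) : ℝ≥0) : ℝ≥0∞) := rfl

lemma gauss_int (g : ℝ → ℝ) :
    ∫ x, g x ∂(gaussianReal 0 1) = ∫ x, gaussianPDFReal 0 1 x * g x := by
  rw [gaussianReal_of_var_ne_zero _ one_ne_zero, gaussianPDF01,
    integral_withDensity_eq_integral_smul
      (measurable_gaussianPDFReal 0 1).real_toNNReal g]
  congr 1
  funext x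
  rw [NNReal.smul_def, smul_eq_mul, Real.coe_toNNReal _ (gaussianPDFReal_nonneg 0 1 x)]

lemma gauss_integrable_pow (q : ℕ) (hq : Even q) :
    Integrable (fun x : ℝ => x ^ q) (gaussianReal 0 1) := by
  rw [gaussianReal_of_var_ne_zero _ one_ne_zero, gaussianPDF01,
    integrable_withDensity_iff_integrable_smul
      (measurable_gaussianPDFReal 0 1).real_toNNReal]
  have h : Integrable (fun x : ℝ => (Real.sqrt (2*π))⁻¹ * (x ^ (q:ℝ) * rexp (-(2⁻¹:ℝ) * x ^ 2))) :=
    (integrable_rpow_mul_exp_neg_mul_sq (b := 2⁻¹) (by norm_num)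
      (lt_of_lt_of_le neg_one_lt_zero (Nat.cast_nonneg q))).const_mul _
  simp only [Real.rpow_natCast] at h
  refine h.congr (ae_of_all _ fun x => ?_)
  show _ = (gaussianPDFReal 0 1 x).toNNReal • x ^ q
  rw [NNReal.smul_def, smul_eq_mul, Real.coe_toNNReal _ (gaussianPDFReal_nonneg 0 1 x), pdf01]
  ring

lemma gauss_moment2 : ∫ x, x ^ 2 ∂(gaussianReal 0 1) = 1 := by
  rw [gauss_int]
  simp_rw [pdf01, mul_assoc, integral_const_mul]
  simp_rw [mul_comm (rexp _)]
  rw [I2]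
  rw [inv_mul_cancel₀ (by positivity)]

lemma gauss_moment4 : ∫ x, x ^ 4 ∂(gaussianReal 0 1) = 3 := by
  rw [gauss_int]
  simp_rw [pdf01, mul_assoc, integral_const_mul]
  simp_rw [mul_comm (rexp _)]
  rw [I4]
  field_simp


/-- Stationary fourth moment of a GARCH(1,1) process with Gaussian innovations:
under stationarity, unit variance and finite fourth moment of the volatility, one has
`3α² + 2αβ + β² < 1` and `E[z₀⁴] = 3(ω² + 2ω(α+β)) / (1 − 3α² − 2αβ − β²)`. -/
theorem garch_fourth_moment {Ω : Type*} [MeasurableSpace Ω]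
    (μ : Measure Ω) [IsProbabilityMeasure μ]
    (w α β : ℝ) (hw : 0 < w) (hα : 0 ≤ α) (hβ : 0 ≤ β)
    (σ₀ ε₀ z₀ σ₁ ε₁ z₁ : Ω → ℝ)
    (hσ₀meas : Measurable σ₀) (hε₀meas : Measurable ε₀) (hσ₁meas : Measurable σ₁)
    (hε₁meas : Measurable ε₁)
    (hσ₀pos : ∀ ω, 0 ≤ σ₀ ω) (hσ₁pos : ∀ ω, 0 ≤ σ₁ ω)
    (hε₀law : Measure.map ε₀ μ = gaussianReal 0 1)
    (hε₁law : Measure.map ε₁ μ = gaussianReal 0 1)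
    (hindep₀ : IndepFun ε₀ σ₀ μ)
    (hz₀ : z₀ = fun ω => σ₀ ω * ε₀ ω)
    (hindep₁ : IndepFun ε₁ (fun ω => (σ₀ ω, z₀ ω)) μ)
    (hσ₁ : ∀ ω, σ₁ ω ^ 2 = w + α * z₀ ω ^ 2 + β * σ₀ ω ^ 2)
    (hz₁ : z₁ = fun ω => σ₁ ω * ε₁ ω)
    (hstat : IdentDistrib (fun ω => (z₁ ω, σ₁ ω)) (fun ω => (z₀ ω, σ₀ ω)) μ μ)
    (hvar : (∫ ω, σ₀ ω ^ 2 ∂μ) = 1)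
    (hmom4 : Integrable (fun ω => σ₀ ω ^ 4) μ) :
    3 * α ^ 2 + 2 * α * β + β ^ 2 < 1 ∧
      (∫ ω, z₀ ω ^ 4 ∂μ) =
        3 * (w ^ 2 + 2 * w * (α + β)) / (1 - 3 * α ^ 2 - 2 * α * β - β ^ 2) := by
  subst hz₀ hz₁
  -- moments of ε₀
  have hεint : ∀ q : ℕ, Even q → Integrable (fun ω => ε₀ ω ^ q) μ := by
    intro q hq
    have h := (integrable_map_measure ((measurable_id.pow_const q)).aestronglyMeasurable
      hε₀meas.aemeasurable).mp (by rw [hε₀law]; exact gauss_integrable_pow q hq)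
    exact h
  have hεmap : ∀ q : ℕ, (∫ ω, ε₀ ω ^ q ∂μ) = ∫ x, x ^ q ∂(gaussianReal 0 1) := by
    intro q
    rw [← hε₀law]
    exact (integral_map hε₀meas.aemeasurable
      ((measurable_id.pow_const q)).aestronglyMeasurable).symm
  have hε2 : (∫ ω, ε₀ ω ^ 2 ∂μ) = 1 := by rw [hεmap 2, gauss_moment2]
  have hε4 : (∫ ω, ε₀ ω ^ 4 ∂μ) = 3 := by rw [hεmap 4, gauss_moment4]
  -- independence of powers
  have hI : ∀ a b : ℕ, IndepFun (fun ω => σ₀ ω ^ a) (fun ω => ε₀ ω ^ b) μ := fun a b =>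
    hindep₀.symm.comp (measurable_id.pow_const a) (measurable_id.pow_const b)
  -- integrability of σ₀ ^ 2
  have hσ2int : Integrable (fun ω => σ₀ ω ^ 2) μ := by
    refine ((integrable_const (1:ℝ)).add hmom4).mono'
      ((hσ₀meas.pow_const 2)).aestronglyMeasurable (ae_of_all _ fun ω => ?_)
    have h := sq_nonneg (σ₀ ω ^ 2 - 1)
    show ‖σ₀ ω ^ 2‖ ≤ 1 + σ₀ ω ^ 4
    rw [Real.norm_eq_abs, abs_of_nonneg (by positivity)]
    nlinarith [sq_nonneg (σ₀ ω)]
  set S := ∫ ω, σ₀ ω ^ 4 ∂μ with hS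
  have hSnonneg : 0 ≤ S := integral_nonneg fun ω => by positivity
  -- product integrabilities and integrals
  have hint22 : Integrable (fun ω => σ₀ ω ^ 2 * ε₀ ω ^ 2) μ :=
    (hI 2 2).integrable_mul hσ2int (hεint 2 ⟨1, rfl⟩)
  have hint44 : Integrable (fun ω => σ₀ ω ^ 4 * ε₀ ω ^ 4) μ :=
    (hI 4 4).integrable_mul hmom4 (hεint 4 ⟨2, rfl⟩)
  have hint42 : Integrable (fun ω => σ₀ ω ^ 4 * ε₀ ω ^ 2) μ :=
    (hI 4 2).integrable_mul hmom4 (hεint 2 ⟨1, rfl⟩)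
  have hv22 : (∫ ω, σ₀ ω ^ 2 * ε₀ ω ^ 2 ∂μ) = 1 := by
    have h : (∫ ω, σ₀ ω ^ 2 * ε₀ ω ^ 2 ∂μ)
        = (∫ ω, σ₀ ω ^ 2 ∂μ) * ∫ ω, ε₀ ω ^ 2 ∂μ :=
      (hI 2 2).integral_fun_mul_eq_mul_integral hσ2int.aestronglyMeasurable (hεint 2 ⟨1, rfl⟩).aestronglyMeasurable
    rw [h, hvar, hε2, mul_one]
  have hv44 : (∫ ω, σ₀ ω ^ 4 * ε₀ ω ^ 4 ∂μ) = S * 3 := by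
    have h : (∫ ω, σ₀ ω ^ 4 * ε₀ ω ^ 4 ∂μ)
        = (∫ ω, σ₀ ω ^ 4 ∂μ) * ∫ ω, ε₀ ω ^ 4 ∂μ :=
      (hI 4 4).integral_fun_mul_eq_mul_integral hmom4.aestronglyMeasurable (hεint 4 ⟨2, rfl⟩).aestronglyMeasurable
    rw [h, hε4]
  have hv42 : (∫ ω, σ₀ ω ^ 4 * ε₀ ω ^ 2 ∂μ) = S := by
    have h : (∫ ω, σ₀ ω ^ 4 * ε₀ ω ^ 2 ∂μ)
        = (∫ ω, σ₀ ω ^ 4 ∂μ) * ∫ ω, ε₀ ω ^ 2 ∂μ :=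
      (hI 4 2).integral_fun_mul_eq_mul_integral hmom4.aestronglyMeasurable (hεint 2 ⟨1, rfl⟩).aestronglyMeasurable
    rw [h, hε2, mul_one]
  -- stationarity: fourth moment of σ₁ equals that of σ₀
  have hid4 : (∫ ω, σ₁ ω ^ 4 ∂μ) = S :=
    ((hstat.comp measurable_snd).comp (measurable_id.pow_const 4)).integral_eq
  -- expansion of σ₁ ^ 4
  have hexp : (fun ω => σ₁ ω ^ 4) = fun ω =>
      w ^ 2 + (α ^ 2 * (σ₀ ω ^ 4 * ε₀ ω ^ 4) + (β ^ 2 * σ₀ ω ^ 4 +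
        ((2 * w * α) * (σ₀ ω ^ 2 * ε₀ ω ^ 2) + ((2 * w * β) * σ₀ ω ^ 2 +
          (2 * α * β) * (σ₀ ω ^ 4 * ε₀ ω ^ 2))))) := by
    funext ω
    have h := hσ₁ ω
    calc σ₁ ω ^ 4 = (σ₁ ω ^ 2) ^ 2 := by ring
    _ = _ := by rw [h]; ring
  rw [hexp] at hid4
  have i6 : Integrable (fun ω => (2 * α * β) * (σ₀ ω ^ 4 * ε₀ ω ^ 2)) μ := hint42.const_mul _
  have i5 : Integrable (fun ω => (2 * w * β) * σ₀ ω ^ 2) μ := hσ2int.const_mul _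
  have i4 : Integrable (fun ω => (2 * w * α) * (σ₀ ω ^ 2 * ε₀ ω ^ 2)) μ := hint22.const_mul _
  have i3 : Integrable (fun ω => β ^ 2 * σ₀ ω ^ 4) μ := hmom4.const_mul _
  have i2 : Integrable (fun ω => α ^ 2 * (σ₀ ω ^ 4 * ε₀ ω ^ 4)) μ := hint44.const_mul _
  have i56 : Integrable (fun ω => (2 * w * β) * σ₀ ω ^ 2
      + (2 * α * β) * (σ₀ ω ^ 4 * ε₀ ω ^ 2)) μ := i5.add i6
  have i456 : Integrable (fun ω => (2 * w * α) * (σ₀ ω ^ 2 * ε₀ ω ^ 2)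
      + ((2 * w * β) * σ₀ ω ^ 2 + (2 * α * β) * (σ₀ ω ^ 4 * ε₀ ω ^ 2))) μ := i4.add i56
  have i3456 : Integrable (fun ω => β ^ 2 * σ₀ ω ^ 4
      + ((2 * w * α) * (σ₀ ω ^ 2 * ε₀ ω ^ 2)
      + ((2 * w * β) * σ₀ ω ^ 2 + (2 * α * β) * (σ₀ ω ^ 4 * ε₀ ω ^ 2)))) μ := i3.add i456
  have i23456 : Integrable (fun ω => α ^ 2 * (σ₀ ω ^ 4 * ε₀ ω ^ 4)
      + (β ^ 2 * σ₀ ω ^ 4 + ((2 * w * α) * (σ₀ ω ^ 2 * ε₀ ω ^ 2)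
      + ((2 * w * β) * σ₀ ω ^ 2 + (2 * α * β) * (σ₀ ω ^ 4 * ε₀ ω ^ 2))))) μ := i2.add i3456
  rw [integral_add (integrable_const _) i23456,
    integral_add i2 i3456,
    integral_add i3 i456,
    integral_add i4 i56,
    integral_add i5 i6,
    integral_const_mul, integral_const_mul, integral_const_mul, integral_const_mul,
    integral_const_mul, integral_const, hv44, hv22, hv42, hvar, probReal_univ] at hid4
  simp only [ENNReal.toReal_one, smul_eq_mul, one_mul, mul_one] at hid4
  -- key linear equation
  have hK : (1 - (3 * α ^ 2 + 2 * α * β + β ^ 2)) * S = w ^ 2 + 2 * w * (α + β) := by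
    linear_combination (-1 : ℝ) * hid4
  have hKpos : 0 < w ^ 2 + 2 * w * (α + β) := by nlinarith
  have hSpos : 0 < S := by
    rcases lt_or_eq_of_le hSnonneg with h | h
    · exact h
    · rw [← h, mul_zero] at hK; nlinarith
  have hc : 3 * α ^ 2 + 2 * α * β + β ^ 2 < 1 := by nlinarith
  refine ⟨hc, ?_⟩
  show (∫ ω, (σ₀ ω * ε₀ ω) ^ 4 ∂μ) = _
  have hz4 : (∫ ω, (σ₀ ω * ε₀ ω) ^ 4 ∂μ) = S * 3 := by
    rw [← hv44]; congr 1; funext ω; ring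
  rw [hz4, eq_div_iff (by intro h; rw [show (1 - 3 * α ^ 2 - 2 * α * β - β ^ 2)
    = 1 - (3 * α ^ 2 + 2 * α * β + β ^ 2) by ring] at h; nlinarith)]
  linear_combination (3 : ℝ) * hK
end

section
/- Consider a stationary GARCH(1,1) step with Gaussian innovations: let ω > 0 and α, β ≥ 0, and let σ₀, ε₀, z₀, σ₁, ε₁, z₁ be real random variables on a probability space (Ω, μ) such that: σ₀ ≥ 0 and σ₁ ≥ 0; ε₀ and ε₁ are standard Gaussian N(0,1); ε₀ is independent of σ₀ and z₀ = σ₀ ε₀; ε₁ is independent of the pair (σ₀, z₀); σ₁² = ω + α z₀² + β σ₀² and z₁ = σ₁ ε₁; the pair (z₁, σ₁) has the same joint distribution as (z₀, σ₀) (stationarity); E[σ₀²] = 1; E[σ₀⁴] < ∞; and E[σ₀⁶] < ∞. Then 15α³ + 9α²β + 3αβ² + β³ < 1 and the stationary sixth moment satisfies E[z₀⁶] = 15 ( ω²(ω + 3α + 3β) + ω E[z₀⁴] (3α² + 2αβ + β²) ) / (1 − 15α³ − 9α²β − 3αβ² − β³). -/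
open MeasureTheory ProbabilityTheory Real
open scoped ENNReal NNReal

namespace GarchAux

lemma integrable_pow_mul_exp (n : ℕ) :
    Integrable (fun x : ℝ => x ^ n * exp (-x ^ 2 / 2)) := by
  have hg : Integrable (fun x : ℝ => ((n.factorial : ℝ) * exp 1) * exp (-(1/4 : ℝ) * x ^ 2)) :=
    (integrable_exp_neg_mul_sq (by norm_num)).const_mul _
  refine hg.mono' ?_ (ae_of_all _ fun x => ?_)
  · exact ((continuous_pow n).mul (by fun_prop)).aestronglyMeasurable
  · have hfact : (0:ℝ) < n.factorial := by positivity
    have h1 : |x| ^ n / n.factorial ≤ exp |x| := by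
      calc |x| ^ n / n.factorial
          ≤ ∑ i ∈ Finset.range (n+1), |x| ^ i / i.factorial := by
            refine Finset.single_le_sum (f := fun i => |x| ^ i / (i.factorial : ℝ))
              (fun i _ => by positivity) (Finset.self_mem_range_succ n)
        _ ≤ exp |x| := Real.sum_le_exp_of_nonneg (abs_nonneg x) _
    have h1' : |x| ^ n ≤ n.factorial * exp |x| := by
      rw [div_le_iff₀ hfact] at h1; linarith
    have h2 : |x| ≤ 1 + x ^ 2 / 4 := by nlinarith [sq_nonneg (|x| - 2), sq_abs x]
    have h3 : exp |x| ≤ exp 1 * exp (x ^ 2 / 4) := by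
      rw [← Real.exp_add]; exact Real.exp_le_exp.2 (by linarith)
    have key : exp (x ^ 2 / 4) * exp (-x ^ 2 / 2) = exp (-(1/4) * x ^ 2) := by
      rw [← Real.exp_add]; congr 1; ring
    rw [norm_mul, norm_pow, Real.norm_eq_abs, Real.norm_eq_abs, Real.abs_exp]
    calc |x| ^ n * exp (-x ^ 2 / 2)
        ≤ ((n.factorial : ℝ) * (exp 1 * exp (x ^ 2 / 4))) * exp (-x ^ 2 / 2) := by
          apply mul_le_mul_of_nonneg_right _ (exp_pos _).le
          exact h1'.trans (mul_le_mul_of_nonneg_left h3 hfact.le)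
      _ = ((n.factorial : ℝ) * exp 1) * (exp (x ^ 2 / 4) * exp (-x ^ 2 / 2)) := by ring
      _ = ((n.factorial : ℝ) * exp 1) * exp (-(1/4) * x ^ 2) := by rw [key]

lemma gauss_rec (n : ℕ) :
    ∫ x : ℝ, x ^ (n+2) * exp (-x ^ 2 / 2) = (n+1 : ℝ) * ∫ x : ℝ, x ^ n * exp (-x ^ 2 / 2) := by
  have hderiv : ∀ x : ℝ, HasDerivAt (fun y : ℝ => y ^ (n+1) * exp (-y ^ 2 / 2))
      ((n+1 : ℝ) * (x ^ n * exp (-x ^ 2 / 2)) - x ^ (n+2) * exp (-x ^ 2 / 2)) x := by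
    intro x
    have h1 : HasDerivAt (fun y : ℝ => -y ^ 2 / 2) (-(2 * x) / 2) x := by
      simpa using (hasDerivAt_pow 2 x).neg.div_const 2
    have h3 := (hasDerivAt_pow (n+1) x).fun_mul h1.exp
    refine h3.congr_deriv ?_
    simp only [Nat.add_sub_cancel]
    push_cast
    ring
  have hf' : Integrable (fun x : ℝ =>
      (n+1:ℝ) * (x ^ n * exp (-x ^ 2 / 2)) - x ^ (n+2) * exp (-x ^ 2 / 2)) :=
    ((integrable_pow_mul_exp n).const_mul _).sub (integrable_pow_mul_exp (n+2))
  have h0 := integral_eq_zero_of_hasDerivAt_of_integrable hderiv hf' (integrable_pow_mul_exp (n+1))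
  rw [integral_sub ((integrable_pow_mul_exp n).const_mul _) (integrable_pow_mul_exp (n+2)),
    integral_const_mul] at h0
  linarith

lemma gauss_I0 : ∫ x : ℝ, x ^ 0 * exp (-x ^ 2 / 2) = Real.sqrt (2 * π) := by
  simp only [pow_zero, one_mul]
  have h : ∀ x : ℝ, -x ^ 2 / 2 = -(1/2 : ℝ) * x ^ 2 := fun x => by ring
  simp_rw [h, integral_gaussian]
  rw [show π / (1/2 : ℝ) = 2 * π by ring]

lemma gauss_I2 : ∫ x : ℝ, x ^ 2 * exp (-x ^ 2 / 2) = Real.sqrt (2 * π) := by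
  have := gauss_rec 0
  rw [gauss_I0] at this
  simpa using this

lemma gauss_I4 : ∫ x : ℝ, x ^ 4 * exp (-x ^ 2 / 2) = 3 * Real.sqrt (2 * π) := by
  have := gauss_rec 2
  rw [gauss_I2] at this
  push_cast at this
  linarith

lemma gauss_I6 : ∫ x : ℝ, x ^ 6 * exp (-x ^ 2 / 2) = 15 * Real.sqrt (2 * π) := by
  have := gauss_rec 4
  rw [gauss_I4] at this
  push_cast at this
  linarith

lemma pdf_eq (x : ℝ) :
    gaussianPDFReal 0 1 x = (Real.sqrt (2 * π))⁻¹ * exp (-x ^ 2 / 2) := by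
  simp [gaussianPDFReal]

lemma measure_eq :
    gaussianReal 0 1
      = volume.withDensity (fun x => ((gaussianPDFReal 0 1 x).toNNReal : ℝ≥0∞)) := by
  rw [gaussianReal_of_var_ne_zero 0 one_ne_zero]
  rfl

lemma smul_pdf_eq (n : ℕ) :
    (fun x : ℝ => (gaussianPDFReal 0 1 x).toNNReal • x ^ n)
      = fun x : ℝ => (Real.sqrt (2 * π))⁻¹ * (x ^ n * exp (-x ^ 2 / 2)) := by
  funext x
  rw [NNReal.smul_def, smul_eq_mul, Real.coe_toNNReal _ (gaussianPDFReal_nonneg 0 1 x), pdf_eq]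
  ring

lemma integral_pow_gauss (n : ℕ) :
    ∫ x, x ^ n ∂(gaussianReal 0 1)
      = (Real.sqrt (2 * π))⁻¹ * ∫ x : ℝ, x ^ n * exp (-x ^ 2 / 2) := by
  rw [measure_eq, integral_withDensity_eq_integral_smul₀
    ((measurable_gaussianPDFReal 0 1).real_toNNReal.aemeasurable) (fun x => x ^ n)]
  rw [show (fun x : ℝ => (gaussianPDFReal 0 1 x).toNNReal • x ^ n)
      = fun x : ℝ => (Real.sqrt (2 * π))⁻¹ * (x ^ n * exp (-x ^ 2 / 2)) from smul_pdf_eq n]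
  rw [integral_const_mul]

lemma integrable_pow_gauss (n : ℕ) :
    Integrable (fun x : ℝ => x ^ n) (gaussianReal 0 1) := by
  rw [measure_eq, integrable_withDensity_iff_integrable_smul₀
    ((measurable_gaussianPDFReal 0 1).real_toNNReal.aemeasurable)]
  rw [smul_pdf_eq n]
  exact (integrable_pow_mul_exp n).const_mul _

lemma sqrt_two_pi_pos : 0 < Real.sqrt (2 * π) :=
  Real.sqrt_pos.2 (by positivity)

lemma gauss_mom2 : ∫ x, x ^ 2 ∂(gaussianReal 0 1) = 1 := by
  rw [integral_pow_gauss, gauss_I2, inv_mul_cancel₀ sqrt_two_pi_pos.ne']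

lemma gauss_mom4 : ∫ x, x ^ 4 ∂(gaussianReal 0 1) = 3 := by
  rw [integral_pow_gauss, gauss_I4]
  field_simp

lemma gauss_mom6 : ∫ x, x ^ 6 ∂(gaussianReal 0 1) = 15 := by
  rw [integral_pow_gauss, gauss_I6]
  field_simp

end GarchAux

/-- Stationary sixth moment of a GARCH(1,1) process with Gaussian innovations:
under stationarity, unit variance and finite fourth and sixth moments of the volatility,
one has `15α³ + 9α²β + 3αβ² + β³ < 1` and
`E[z₀⁶] = 15(ω²(ω + 3α + 3β) + ω E[z₀⁴](3α² + 2αβ + β²)) / (1 − 15α³ − 9α²β − 3αβ² − β³)`. -/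
theorem garch_sixth_moment {Ω : Type*} [MeasurableSpace Ω]
    (μ : Measure Ω) [IsProbabilityMeasure μ]
    (w α β : ℝ) (hw : 0 < w) (hα : 0 ≤ α) (hβ : 0 ≤ β)
    (σ₀ ε₀ z₀ σ₁ ε₁ z₁ : Ω → ℝ)
    (hσ₀meas : Measurable σ₀) (hε₀meas : Measurable ε₀) (hσ₁meas : Measurable σ₁)
    (hε₁meas : Measurable ε₁)
    (hσ₀pos : ∀ ω, 0 ≤ σ₀ ω) (hσ₁pos : ∀ ω, 0 ≤ σ₁ ω)
    (hε₀law : Measure.map ε₀ μ = gaussianReal 0 1)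
    (hε₁law : Measure.map ε₁ μ = gaussianReal 0 1)
    (hindep₀ : IndepFun ε₀ σ₀ μ)
    (hz₀ : z₀ = fun ω => σ₀ ω * ε₀ ω)
    (hindep₁ : IndepFun ε₁ (fun ω => (σ₀ ω, z₀ ω)) μ)
    (hσ₁ : ∀ ω, σ₁ ω ^ 2 = w + α * z₀ ω ^ 2 + β * σ₀ ω ^ 2)
    (hz₁ : z₁ = fun ω => σ₁ ω * ε₁ ω)
    (hstat : IdentDistrib (fun ω => (z₁ ω, σ₁ ω)) (fun ω => (z₀ ω, σ₀ ω)) μ μ)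
    (hvar : (∫ ω, σ₀ ω ^ 2 ∂μ) = 1)
    (hmom4 : Integrable (fun ω => σ₀ ω ^ 4) μ)
    (hmom6 : Integrable (fun ω => σ₀ ω ^ 6) μ) :
    15 * α ^ 3 + 9 * α ^ 2 * β + 3 * α * β ^ 2 + β ^ 3 < 1 ∧
      (∫ ω, z₀ ω ^ 6 ∂μ) =
        15 * (w ^ 2 * (w + 3 * α + 3 * β) +
            w * (∫ ω, z₀ ω ^ 4 ∂μ) * (3 * α ^ 2 + 2 * α * β + β ^ 2)) /
          (1 - 15 * α ^ 3 - 9 * α ^ 2 * β - 3 * α * β ^ 2 - β ^ 3) := by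
  -- moments of ε₀
  have hεint : ∀ n : ℕ, Integrable (fun ω => ε₀ ω ^ n) μ := by
    intro n
    have h := GarchAux.integrable_pow_gauss n
    rw [← hε₀law] at h
    exact (integrable_map_measure ((measurable_id.pow_const n).aestronglyMeasurable)
      hε₀meas.aemeasurable).1 h
  have hεmom : ∀ n : ℕ, (∫ ω, ε₀ ω ^ n ∂μ) = ∫ x, x ^ n ∂(gaussianReal 0 1) := by
    intro n
    rw [← hε₀law]
    exact (integral_map hε₀meas.aemeasurable
      ((measurable_id.pow_const n).aestronglyMeasurable)).symm
  have he2 : (∫ ω, ε₀ ω ^ 2 ∂μ) = 1 := by rw [hεmom 2, GarchAux.gauss_mom2]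
  have he4 : (∫ ω, ε₀ ω ^ 4 ∂μ) = 3 := by rw [hεmom 4, GarchAux.gauss_mom4]
  have he6 : (∫ ω, ε₀ ω ^ 6 ∂μ) = 15 := by rw [hεmom 6, GarchAux.gauss_mom6]
  -- integrability of σ₀ ^ 2
  have hmom2 : Integrable (fun ω => σ₀ ω ^ 2) μ := by
    refine ((integrable_const (1:ℝ)).add hmom4).mono'
      ((hσ₀meas.pow_const 2).aestronglyMeasurable) (ae_of_all _ fun ω => ?_)
    simp only [Pi.add_apply]
    have h0 := hσ₀pos ω
    rw [Real.norm_eq_abs, abs_of_nonneg (by positivity)]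
    nlinarith [sq_nonneg (σ₀ ω ^ 2 - 1)]
  -- independence of powers
  have hip : ∀ a b : ℕ, IndepFun (fun ω => σ₀ ω ^ a) (fun ω => ε₀ ω ^ b) μ := fun a b =>
    hindep₀.symm.comp (measurable_id.pow_const a) (measurable_id.pow_const b)
  have hprodint : ∀ a b : ℕ, Integrable (fun ω => σ₀ ω ^ a) μ →
      Integrable (fun ω => σ₀ ω ^ a * ε₀ ω ^ b) μ := fun a b ha =>
    (hip a b).integrable_mul ha (hεint b)
  have hprodeq : ∀ a b : ℕ, Integrable (fun ω => σ₀ ω ^ a) μ →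
      (∫ ω, σ₀ ω ^ a * ε₀ ω ^ b ∂μ) = (∫ ω, σ₀ ω ^ a ∂μ) * (∫ ω, ε₀ ω ^ b ∂μ) := fun a b ha =>
    (hip a b).integral_mul_eq_mul_integral ha.aestronglyMeasurable (hεint b).aestronglyMeasurable
  set m4 := ∫ ω, σ₀ ω ^ 4 ∂μ with hm4def
  set m6 := ∫ ω, σ₀ ω ^ 6 ∂μ with hm6def
  -- z₀ moments
  have hz4 : (∫ ω, z₀ ω ^ 4 ∂μ) = 3 * m4 := by
    rw [hz₀]
    simp_rw [mul_pow]
    rw [hprodeq 4 4 hmom4, he4]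
    ring
  have hz6 : (∫ ω, z₀ ω ^ 6 ∂μ) = 15 * m6 := by
    rw [hz₀]
    simp_rw [mul_pow]
    rw [hprodeq 6 6 hmom6, he6]
    ring
  -- stationarity : ∫ σ₁ ^ 6 = m6
  have hstat6 : (∫ ω, σ₁ ω ^ 6 ∂μ) = m6 := by
    exact (hstat.comp (u := fun p : ℝ × ℝ => p.2 ^ 6)
      (measurable_snd.pow_const 6)).integral_eq
  -- expansion of σ₁ ^ 6
  have key : ∀ ω, σ₁ ω ^ 6 =
      w ^ 3 + ((3*w^2*α) * (σ₀ ω ^ 2 * ε₀ ω ^ 2) + ((3*w^2*β) * σ₀ ω ^ 2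
        + ((3*w*α^2) * (σ₀ ω ^ 4 * ε₀ ω ^ 4) + ((6*w*α*β) * (σ₀ ω ^ 4 * ε₀ ω ^ 2)
        + ((3*w*β^2) * σ₀ ω ^ 4
        + ((α^3) * (σ₀ ω ^ 6 * ε₀ ω ^ 6) + ((3*α^2*β) * (σ₀ ω ^ 6 * ε₀ ω ^ 4)
        + ((3*α*β^2) * (σ₀ ω ^ 6 * ε₀ ω ^ 2) + (β^3) * σ₀ ω ^ 6)))))))) := by
    intro ω
    have h : σ₁ ω ^ 6 = (σ₁ ω ^ 2) ^ 3 := by ring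
    rw [h, hσ₁ ω, hz₀]
    ring
  -- integrability of all terms
  have i1 : Integrable (fun ω => (3*w^2*α) * (σ₀ ω ^ 2 * ε₀ ω ^ 2)) μ :=
    (hprodint 2 2 hmom2).const_mul _
  have i2 : Integrable (fun ω => (3*w^2*β) * σ₀ ω ^ 2) μ := hmom2.const_mul _
  have i3 : Integrable (fun ω => (3*w*α^2) * (σ₀ ω ^ 4 * ε₀ ω ^ 4)) μ :=
    (hprodint 4 4 hmom4).const_mul _
  have i4 : Integrable (fun ω => (6*w*α*β) * (σ₀ ω ^ 4 * ε₀ ω ^ 2)) μ :=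
    (hprodint 4 2 hmom4).const_mul _
  have i5 : Integrable (fun ω => (3*w*β^2) * σ₀ ω ^ 4) μ := hmom4.const_mul _
  have i6 : Integrable (fun ω => (α^3) * (σ₀ ω ^ 6 * ε₀ ω ^ 6)) μ :=
    (hprodint 6 6 hmom6).const_mul _
  have i7 : Integrable (fun ω => (3*α^2*β) * (σ₀ ω ^ 6 * ε₀ ω ^ 4)) μ :=
    (hprodint 6 4 hmom6).const_mul _
  have i8 : Integrable (fun ω => (3*α*β^2) * (σ₀ ω ^ 6 * ε₀ ω ^ 2)) μ :=
    (hprodint 6 2 hmom6).const_mul _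
  have i9 : Integrable (fun ω => (β^3) * σ₀ ω ^ 6) μ := hmom6.const_mul _
  -- partial sums, innermost first
  have s8 : Integrable (fun ω => (3*α*β^2) * (σ₀ ω ^ 6 * ε₀ ω ^ 2) + (β^3) * σ₀ ω ^ 6) μ :=
    i8.add i9
  have s7 : Integrable (fun ω => (3*α^2*β) * (σ₀ ω ^ 6 * ε₀ ω ^ 4)
      + ((3*α*β^2) * (σ₀ ω ^ 6 * ε₀ ω ^ 2) + (β^3) * σ₀ ω ^ 6)) μ := i7.add s8
  have s6 : Integrable (fun ω => (α^3) * (σ₀ ω ^ 6 * ε₀ ω ^ 6) + ((3*α^2*β) * (σ₀ ω ^ 6 * ε₀ ω ^ 4)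
      + ((3*α*β^2) * (σ₀ ω ^ 6 * ε₀ ω ^ 2) + (β^3) * σ₀ ω ^ 6))) μ := i6.add s7
  have s5 : Integrable (fun ω => (3*w*β^2) * σ₀ ω ^ 4
      + ((α^3) * (σ₀ ω ^ 6 * ε₀ ω ^ 6) + ((3*α^2*β) * (σ₀ ω ^ 6 * ε₀ ω ^ 4)
      + ((3*α*β^2) * (σ₀ ω ^ 6 * ε₀ ω ^ 2) + (β^3) * σ₀ ω ^ 6)))) μ := i5.add s6
  have s4 : Integrable (fun ω => (6*w*α*β) * (σ₀ ω ^ 4 * ε₀ ω ^ 2)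
      + ((3*w*β^2) * σ₀ ω ^ 4
      + ((α^3) * (σ₀ ω ^ 6 * ε₀ ω ^ 6) + ((3*α^2*β) * (σ₀ ω ^ 6 * ε₀ ω ^ 4)
      + ((3*α*β^2) * (σ₀ ω ^ 6 * ε₀ ω ^ 2) + (β^3) * σ₀ ω ^ 6))))) μ := i4.add s5
  have s3 : Integrable (fun ω => (3*w*α^2) * (σ₀ ω ^ 4 * ε₀ ω ^ 4)
      + ((6*w*α*β) * (σ₀ ω ^ 4 * ε₀ ω ^ 2)
      + ((3*w*β^2) * σ₀ ω ^ 4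
      + ((α^3) * (σ₀ ω ^ 6 * ε₀ ω ^ 6) + ((3*α^2*β) * (σ₀ ω ^ 6 * ε₀ ω ^ 4)
      + ((3*α*β^2) * (σ₀ ω ^ 6 * ε₀ ω ^ 2) + (β^3) * σ₀ ω ^ 6)))))) μ := i3.add s4
  have s2 : Integrable (fun ω => (3*w^2*β) * σ₀ ω ^ 2
      + ((3*w*α^2) * (σ₀ ω ^ 4 * ε₀ ω ^ 4)
      + ((6*w*α*β) * (σ₀ ω ^ 4 * ε₀ ω ^ 2)
      + ((3*w*β^2) * σ₀ ω ^ 4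
      + ((α^3) * (σ₀ ω ^ 6 * ε₀ ω ^ 6) + ((3*α^2*β) * (σ₀ ω ^ 6 * ε₀ ω ^ 4)
      + ((3*α*β^2) * (σ₀ ω ^ 6 * ε₀ ω ^ 2) + (β^3) * σ₀ ω ^ 6))))))) μ := i2.add s3
  have s1 : Integrable (fun ω => (3*w^2*α) * (σ₀ ω ^ 2 * ε₀ ω ^ 2)
      + ((3*w^2*β) * σ₀ ω ^ 2
      + ((3*w*α^2) * (σ₀ ω ^ 4 * ε₀ ω ^ 4)
      + ((6*w*α*β) * (σ₀ ω ^ 4 * ε₀ ω ^ 2)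
      + ((3*w*β^2) * σ₀ ω ^ 4
      + ((α^3) * (σ₀ ω ^ 6 * ε₀ ω ^ 6) + ((3*α^2*β) * (σ₀ ω ^ 6 * ε₀ ω ^ 4)
      + ((3*α*β^2) * (σ₀ ω ^ 6 * ε₀ ω ^ 2) + (β^3) * σ₀ ω ^ 6)))))))) μ := i1.add s2
  -- compute ∫ σ₁ ^ 6
  have hbig : (∫ ω, σ₁ ω ^ 6 ∂μ) =
      w ^ 3 + ((3*w^2*α) * 1 + ((3*w^2*β) * 1
        + ((3*w*α^2) * (m4 * 3) + ((6*w*α*β) * (m4 * 1)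
        + ((3*w*β^2) * m4
        + ((α^3) * (m6 * 15) + ((3*α^2*β) * (m6 * 3)
        + ((3*α*β^2) * (m6 * 1) + (β^3) * m6)))))))) := by
    simp_rw [key]
    rw [integral_add (integrable_const _) s1, integral_const,
      integral_add i1 s2, integral_add i2 s3, integral_add i3 s4, integral_add i4 s5,
      integral_add i5 s6, integral_add i6 s7, integral_add i7 s8, integral_add i8 i9]
    simp only [measure_univ, probReal_univ, ENNReal.toReal_one, smul_eq_mul, one_mul, integral_const_mul]
    rw [hprodeq 2 2 hmom2, hprodeq 4 4 hmom4, hprodeq 4 2 hmom4,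
      hprodeq 6 6 hmom6, hprodeq 6 4 hmom6, hprodeq 6 2 hmom6,
      hvar, he2, he4, he6]
    simp only [← hm4def, ← hm6def]
    ring
  -- the stationarity equation
  rw [hstat6] at hbig
  have heq : (1 - (15 * α ^ 3 + 9 * α ^ 2 * β + 3 * α * β ^ 2 + β ^ 3)) * m6
      = w ^ 3 + 3*w^2*α + 3*w^2*β + (9*α^2 + 6*α*β + 3*β^2) * w * m4 := by
    linear_combination hbig
  have hm4nonneg : 0 ≤ m4 := integral_nonneg fun ω => by positivity
  have hm6nonneg : 0 ≤ m6 := integral_nonneg fun ω => by positivity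
  have hKpos : 0 < w ^ 3 + 3*w^2*α + 3*w^2*β + (9*α^2 + 6*α*β + 3*β^2) * w * m4 := by
    have h1 : 0 < w ^ 3 := pow_pos hw 3
    have h2 : (0:ℝ) ≤ 3*w^2*α := by positivity
    have h3 : (0:ℝ) ≤ 3*w^2*β := by positivity
    have h4 : (0:ℝ) ≤ (9*α^2 + 6*α*β + 3*β^2) * w * m4 := by positivity
    linarith
  have hc : 15 * α ^ 3 + 9 * α ^ 2 * β + 3 * α * β ^ 2 + β ^ 3 < 1 := by
    by_contra hcon
    push_neg at hcon
    have h1 : (1 - (15 * α ^ 3 + 9 * α ^ 2 * β + 3 * α * β ^ 2 + β ^ 3)) * m6 ≤ 0 :=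
      mul_nonpos_of_nonpos_of_nonneg (by linarith) hm6nonneg
    linarith
  refine ⟨hc, ?_⟩
  rw [hz4, hz6, eq_div_iff
    (by linarith : (1 - 15 * α ^ 3 - 9 * α ^ 2 * β - 3 * α * β ^ 2 - β ^ 3) ≠ 0)]
  linear_combination 15 * heq
end
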